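/- For a finite group Γ and any permutation ℤΓ-module F, the group H²(Γ, F) is annihilated by the exponent exp(Γ), i.e., exp(Γ)·x = 0 for all x ∈ H²(Γ, F). -/

import Mathlib

open CategoryTheory CategoryTheory.Limits groupCohomology

/-- A permutation `ℤΓ`-module: one isomorphic to `ℤ[X]` for some `Γ`-set `X`. -/
def IsPermutationModule {Γ : Type} [Group Γ] (F : Rep ℤ Γ) : Prop :=
  ∃ (X : Type) (_ : MulAction Γ X), Nonempty (F ≅ Rep.ofMulAction ℤ Γ X)

/-- A permutation projective module: a direct summand of a permutation module. -/
def IsPermutationProjective {Γ : Type} [Group Γ] (M : Rep.{0} ℤ Γ) : Prop :=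
  ∃ F : Rep.{0} ℤ Γ, IsPermutationModule F ∧ ∃ (i : M ⟶ F) (r : F ⟶ M), i ≫ r = 𝟙 M

/-- A coflasque module: `ℤ`-free with vanishing `H¹(Γ', M)` for all subgroups `Γ' ≤ Γ`. -/
def IsCoflasque {Γ : Type} [Group Γ] (M : Rep.{0} ℤ Γ) : Prop :=
  (@Module.Free ℤ M.V _ _ M.hV2) ∧
    ∀ Γ' : Subgroup Γ,
      Subsingleton (H1 (Rep.res Γ'.subtype M))

/-- A permutation presentation of `M`: an exact sequence `0 → F → F → M → 0`
with `F` a permutation module. -/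
def HasPermutationPresentation {Γ : Type} [Group Γ] (M : Rep.{0} ℤ Γ) : Prop :=
  ∃ (F : Rep.{0} ℤ Γ) (_ : IsPermutationModule F) (f : F ⟶ F) (π : F ⟶ M),
    Function.Injective f.hom ∧ Function.Surjective π.hom ∧ Function.Exact f.hom π.hom

/-- `π` is `H⁰`-surjective if it is surjective on `Γ'`-invariants for every subgroup `Γ'`. -/
def IsH0Surjective {Γ : Type} [Group Γ] {M N : Rep.{0} ℤ Γ} (π : M ⟶ N) : Prop :=
  ∀ Γ' : Subgroup Γ, ∀ n : N, (∀ γ : Γ', N.ρ ↑γ n = n) →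
    ∃ m : M, (∀ γ : Γ', M.ρ ↑γ m = m) ∧ π.hom m = n

lemma perm_key (Γ : Type) [Group Γ] [Finite Γ] (X : Type) [MulAction Γ X]
    (f : Γ × Γ → (X →₀ ℤ))
    (hf : ∀ g h j : Γ, ∀ x : X,
      f (h, j) (g⁻¹ • x) - f (g * h, j) x + f (g, h * j) x - f (g, h) x = 0) :
    ∃ b : Γ → (X →₀ ℤ), ∀ g h : Γ, ∀ x : X,
      b h (g⁻¹ • x) - b (g * h) x + b g x = (Monoid.exponent Γ : ℤ) * f (g, h) x := by
  classical
  cases nonempty_fintype Γ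
  set n : ℕ := Monoid.exponent Γ with hn
  set C : Γ → X → ℚ := fun g x => (∑ h : Γ, (f (g, h) x : ℚ)) / (Fintype.card Γ : ℚ)
    with hCdef
  have hcard : (Fintype.card Γ : ℚ) ≠ 0 := by
    exact_mod_cast (Fintype.card_pos).ne'
  -- the averaged cochain has coboundary f (over ℚ)
  have hC : ∀ g h : Γ, ∀ x : X, C h (g⁻¹ • x) - C (g * h) x + C g x = (f (g, h) x : ℚ) := by
    intro g h x
    have e1 : ∀ j : Γ, f (h, j) (g⁻¹ • x) = f (g * h, j) x - f (g, h * j) x + f (g, h) x := by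
      intro j; have := hf g h j x; linarith
    have hsum : (∑ j : Γ, (f (h, j) (g⁻¹ • x) : ℚ)) - (∑ j : Γ, (f (g * h, j) x : ℚ))
        + (∑ j : Γ, (f (g, j) x : ℚ)) = (Fintype.card Γ : ℚ) * (f (g, h) x : ℚ) := by
      have reindex : ∑ j : Γ, (f (g, h * j) x : ℚ) = ∑ j : Γ, (f (g, j) x : ℚ) :=
        Fintype.sum_equiv (Equiv.mulLeft h) _ _ (fun j => rfl)
      simp_rw [e1]
      push_cast
      rw [Finset.sum_add_distrib, Finset.sum_sub_distrib, Finset.sum_const, reindex]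
      simp [Finset.card_univ, mul_comm]
      ring
    simp only [hCdef]
    rw [div_sub_div_same, ← add_div, div_eq_iff hcard]
    linear_combination hsum
  -- cocycle congruence mod ℤ
  have hcong : ∀ g h : Γ, ∀ x : X, ∃ m : ℤ,
      (m : ℚ) = C (g * h) x - C h (g⁻¹ • x) - C g x := by
    intro g h x
    exact ⟨-f (g, h) x, by push_cast; linarith [hC g h x]⟩
  have hone : ∀ x : X, ∃ m : ℤ, (m : ℚ) = C 1 x := by
    intro x
    refine ⟨f (1, 1) x, ?_⟩
    have := hC 1 1 x
    simp only [inv_one, one_smul, one_mul] at this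
    linarith
  have hfix : ∀ (h : Γ) (x : X), h • x = x → ∀ k : ℕ, h ^ k • x = x := by
    intro h x hx k
    induction k with
    | zero => simp
    | succ k ih => rw [pow_succ, mul_smul, hx]; exact ih
  have hpow : ∀ (h : Γ) (x : X), h • x = x → ∀ k : ℕ,
      ∃ m : ℤ, (m : ℚ) = C (h ^ k) x - (k : ℚ) * C h x := by
    intro h x hx k
    induction k with
    | zero =>
      obtain ⟨m, hm⟩ := hone x
      exact ⟨m, by simpa using hm⟩
    | succ k ih =>
      obtain ⟨m2, hm2⟩ := ih
      obtain ⟨m1, hm1⟩ := hcong (h ^ k) h x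
      have hinv : (h ^ k)⁻¹ • x = x := inv_smul_eq_iff.mpr (hfix h x hx k).symm
      rw [hinv] at hm1
      refine ⟨m1 + m2, ?_⟩
      rw [pow_succ]
      push_cast
      linarith
  have hexp : ∀ (h : Γ) (x : X), h • x = x → ∃ m : ℤ, (m : ℚ) = (n : ℚ) * C h x := by
    intro h x hx
    obtain ⟨m1, hm1⟩ := hpow h x hx n
    obtain ⟨m0, hm0⟩ := hone x
    rw [hn, Monoid.pow_exponent_eq_one h] at hm1
    exact ⟨m0 - m1, by push_cast; linarith⟩
  -- orbit representatives
  let S := MulAction.orbitRel Γ X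
  let rep : X → X := fun x => (Quotient.mk S x).out
  have hrep_orbit : ∀ x : X, ∃ g : Γ, g • rep x = x := by
    intro x
    have h1 : S.r (Quotient.mk S x).out x := Quotient.exact (Quotient.out_eq _)
    rw [MulAction.orbitRel_apply] at h1
    obtain ⟨g, hg⟩ := h1
    refine ⟨g⁻¹, ?_⟩
    show g⁻¹ • (Quotient.mk S x).out = x
    rw [← hg]
    simp
  let σ : X → Γ := fun x => (hrep_orbit x).choose
  have hσ : ∀ x, σ x • rep x = x := fun x => (hrep_orbit x).choose_spec
  have hrep_smul : ∀ (g : Γ) (x : X), rep (g • x) = rep x := by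
    intro g x
    have : (Quotient.mk S (g • x)) = Quotient.mk S x :=
      Quotient.sound (show S.r (g • x) x from MulAction.mem_orbit x g)
    simp only [rep, this]
  set bbar : X → ℚ := fun x => -((n : ℚ) * C (σ x) x) with hbbar
  have hB : ∀ (g : Γ) (x : X), ∃ m : ℤ,
      (m : ℚ) = (n : ℚ) * C g x - (bbar (g⁻¹ • x) - bbar x) := by
    intro g x
    have hgy : g • (g⁻¹ • x) = x := by rw [smul_inv_smul]
    have hrepyx : rep (g⁻¹ • x) = rep x := by
      conv_rhs => rw [← hgy, hrep_smul]
    have hσy : σ (g⁻¹ • x) • rep x = g⁻¹ • x := by rw [← hrepyx]; exact hσ _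
    have hstab : ((σ x)⁻¹ * g * σ (g⁻¹ • x)) • rep x = rep x := by
      rw [mul_smul, mul_smul, hσy, hgy, inv_smul_eq_iff]
      exact (hσ x).symm
    obtain ⟨m1, hm1⟩ := hcong g (σ (g⁻¹ • x)) x
    obtain ⟨m2, hm2⟩ := hcong (σ x) ((σ x)⁻¹ * g * σ (g⁻¹ • x)) x
    obtain ⟨m3, hm3⟩ := hexp _ _ hstab
    have e1 : σ x * ((σ x)⁻¹ * g * σ (g⁻¹ • x)) = g * σ (g⁻¹ • x) := by group
    have e2 : (σ x)⁻¹ • x = rep x := inv_smul_eq_iff.mpr (hσ x).symm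
    rw [e1, e2] at hm2
    refine ⟨m3 + n * m2 - n * m1, ?_⟩
    simp only [hbbar]
    push_cast
    linear_combination hm3 + (n : ℚ) * hm2 - (n : ℚ) * hm1
  -- support control
  set T : Finset X := Finset.univ.biUnion (fun p : Γ × Γ => (f p).support) with hT
  have hCT : ∀ (g : Γ) (x : X), x ∉ T → C g x = 0 := by
    intro g x hx
    have : ∀ h : Γ, f (g, h) x = 0 := by
      intro h
      by_contra hne
      exact hx (Finset.mem_biUnion.mpr ⟨(g, h), Finset.mem_univ _,
        Finsupp.mem_support_iff.mpr hne⟩)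
    simp only [hCdef, this]
    simp
  have hbT : ∀ x : X, x ∉ T → bbar x = 0 := by
    intro x hx; simp only [hbbar, hCT _ x hx, mul_zero, neg_zero]
  let β : Γ → (X →₀ ℤ) := fun g => Finsupp.onFinset (T ∪ T.image (g • ·))
    (fun x => (hB g x).choose) (by
      intro x hx
      by_contra hmem
      rw [Finset.mem_union] at hmem
      push_neg at hmem
      obtain ⟨hx1, hx2⟩ := hmem
      have hx3 : g⁻¹ • x ∉ T := by
        intro hc
        exact hx2 (Finset.mem_image.mpr ⟨g⁻¹ • x, hc, by rw [smul_inv_smul]⟩)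
      have h0 : (n : ℚ) * C g x - (bbar (g⁻¹ • x) - bbar x) = 0 := by
        rw [hCT g x hx1, hbT _ hx3, hbT _ hx1]; ring
      have hc := ((hB g x).choose_spec).trans h0
      exact hx (by exact_mod_cast hc))
  refine ⟨β, ?_⟩
  intro g h x
  have hβ : ∀ (g' : Γ) (x' : X), ((β g' x' : ℤ) : ℚ)
      = (n : ℚ) * C g' x' - (bbar (g'⁻¹ • x') - bbar x') := by
    intro g' x'
    exact (hB g' x').choose_spec
  have hsm : h⁻¹ • (g⁻¹ • x) = (g * h)⁻¹ • x := by rw [mul_inv_rev, mul_smul]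
  have key : ((β h (g⁻¹ • x) - β (g * h) x + β g x : ℤ) : ℚ)
      = (((n : ℤ) * f (g, h) x : ℤ) : ℚ) := by
    push_cast
    rw [hβ h (g⁻¹ • x), hβ (g * h) x, hβ g x, hsm]
    linear_combination (n : ℚ) * hC g h x
  exact_mod_cast key

theorem exponent_smul_h2_of_permutation (Γ : Type) [Group Γ] [Finite Γ] (F : Rep ℤ Γ)
    (hF : IsPermutationModule F) (x : H2 F) : Monoid.exponent Γ • x = 0 := by
  obtain ⟨X, _inst, ⟨e⟩⟩ := hF
  obtain ⟨f, rfl⟩ := (show Function.Surjective (groupCohomology.H2π F) from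
    fun y => groupCohomology.H2_induction_on y fun f => ⟨f, rfl⟩) x
  let φ : F → (X →₀ ℤ) := fun v => (e.hom.hom v).coeff
  let ψ : (X →₀ ℤ) → F := fun v => e.inv.hom (MonoidAlgebra.ofCoeff v)
  have hφ0 : φ 0 = 0 := by simp only [φ, map_zero]; rfl
  have hφsub : ∀ a b, φ (a - b) = φ a - φ b := fun a b => by
    simp only [φ, map_sub]; exact map_sub (MonoidAlgebra.coeffAddEquiv (R := ℤ) (M := X)) _ _
  have hφadd : ∀ a b, φ (a + b) = φ a + φ b := fun a b => by
    simp only [φ, map_add]; exact map_add (MonoidAlgebra.coeffAddEquiv (R := ℤ) (M := X)) _ _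
  have hψsub : ∀ a b, ψ (a - b) = ψ a - ψ b := fun a b => by
    simp only [ψ]; rw [← map_sub]
    exact congrArg e.inv.hom (map_sub (MonoidAlgebra.coeffAddEquiv (R := ℤ) (M := X)).symm a b)
  have hψadd : ∀ a b, ψ (a + b) = ψ a + ψ b := fun a b => by
    simp only [ψ]; rw [← map_add]
    exact congrArg e.inv.hom (map_add (MonoidAlgebra.coeffAddEquiv (R := ℤ) (M := X)).symm a b)
  have hψφ : ∀ v : F, ψ (φ v) = v := by
    intro v
    show e.inv.hom (e.hom.hom v) = v
    simp
  have hφρ : ∀ (g : Γ) (v : F) (x : X), φ (F.ρ g v) x = φ v (g⁻¹ • x) := by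
    intro g v x
    show (e.hom.hom (F.ρ g v)).coeff x = _
    rw [Rep.hom_comm_apply e.hom g v]
    exact Representation.coeff_ofMulAction g _ x
  have hψρ : ∀ (g : Γ) (w : X →₀ ℤ),
      ψ (Representation.ofMulAction ℤ Γ X g (MonoidAlgebra.ofCoeff w)).coeff = F.ρ g (ψ w) :=
    fun g w => Rep.hom_comm_apply e.inv g _
  set f' : Γ × Γ → (X →₀ ℤ) := fun p => φ (f p) with hf'def
  have hf' : ∀ g h j : Γ, ∀ x : X,
      f' (h, j) (g⁻¹ • x) - f' (g * h, j) x + f' (g, h * j) x - f' (g, h) x = 0 := by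
    intro g h j x
    have h1 := (mem_cocycles₂_def (f : Γ × Γ → F)).1 f.2 g h j
    have h1' := congrArg φ h1
    rw [hφsub, hφadd, hφsub, hφ0] at h1'
    have h2 := DFunLike.congr_fun h1' x
    simp only [Finsupp.sub_apply, Finsupp.add_apply, Finsupp.coe_zero, Pi.zero_apply] at h2
    rw [hφρ] at h2
    exact h2
  obtain ⟨b', hb'⟩ := perm_key Γ X f' hf'
  have hP : ∀ g h : Γ, (Representation.ofMulAction ℤ Γ X g (MonoidAlgebra.ofCoeff (b' h))).coeff
      - b' (g * h) + b' g
      = (Monoid.exponent Γ : ℤ) • f' (g, h) := by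
    intro g h
    ext y
    rw [Finsupp.add_apply, Finsupp.sub_apply, Finsupp.smul_apply,
      Representation.coeff_ofMulAction, MonoidAlgebra.coeff_ofCoeff, hb' g h y]
    simp [smul_eq_mul]
  have main : ∀ g h : Γ, F.ρ g (ψ (b' h)) - ψ (b' (g * h)) + ψ (b' g)
      = (Monoid.exponent Γ • f) (g, h) := by
    intro g h
    calc F.ρ g (ψ (b' h)) - ψ (b' (g * h)) + ψ (b' g)
        = ψ ((Representation.ofMulAction ℤ Γ X g (MonoidAlgebra.ofCoeff (b' h))).coeff
            - b' (g * h) + b' g) := by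
          rw [hψadd, hψsub, hψρ]
      _ = ψ ((Monoid.exponent Γ : ℤ) • f' (g, h)) := by rw [hP]
      _ = (Monoid.exponent Γ : ℤ) • ψ (f' (g, h)) := by
          simp only [ψ]; rw [← map_zsmul]; rfl
      _ = (Monoid.exponent Γ : ℤ) • f (g, h) := by rw [hf'def]; simp only; rw [hψφ]
      _ = Monoid.exponent Γ • (f (g, h)) := natCast_zsmul _ _
      _ = (Monoid.exponent Γ • f) (g, h) := rfl
  have hmem : ⇑(Monoid.exponent Γ • f) ∈ coboundaries₂ F :=
    ⟨fun g => ψ (b' g), funext fun p => main p.1 p.2⟩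
  rw [← map_nsmul]
  exact (H2π_eq_zero_iff _).mpr hmem
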